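/- arXiv:1611.01338 — 2 statements merged into one kernel-verified Lean document; each statement's English description precedes it below -/
import Mathlib

section
/- For all complex numbers z, w and real t, the Gaussian integral over (x,y) ∈ ℝ² of exp(-ν[(x - z/√2)² + (y - w/√2)² + (t - (x+iy)/√2)²]) equals (π/ν)·exp(-ν(t - (z+iw)/2)²), where ν > 0. -/
open Complex Real MeasureTheory

theorem gaussian_composition_integral (ν : ℝ) (hν : 0 < ν) (z w : ℂ) (t : ℝ) :
    ∫ p : ℝ × ℝ,
      Complex.exp (-(ν : ℂ) * (((p.1 : ℂ) - z / (Real.sqrt 2 : ℂ)) ^ 2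
        + ((p.2 : ℂ) - w / (Real.sqrt 2 : ℂ)) ^ 2
        + ((t : ℂ) - ((p.1 : ℂ) + Complex.I * (p.2 : ℂ)) / (Real.sqrt 2 : ℂ)) ^ 2))
    = ((Real.pi / ν : ℝ) : ℂ) * Complex.exp (-(ν : ℂ) * ((t : ℂ) - (z + Complex.I * w) / 2) ^ 2) := by
  have hν0 : (ν : ℂ) ≠ 0 := by exact_mod_cast hν.ne'
  set νc : ℂ := (ν : ℂ) with hνc
  set s : ℂ := ((Real.sqrt 2 : ℝ) : ℂ) with hsdef
  have hs2 : s ^ 2 = 2 := by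
    rw [hsdef, ← Complex.ofReal_pow, Real.sq_sqrt (by norm_num : (0:ℝ) ≤ 2)]
    norm_num
  have hs0 : s ≠ 0 := by
    intro h; rw [h] at hs2; norm_num at hs2
  have hdiv : ∀ a : ℂ, a / s = a * s / 2 := by
    intro a
    field_simp
    first
    | linear_combination a * hs2
    | linear_combination (-a) * hs2
  set B : ℂ := -νc / 2 with hB
  set Cy : ℝ → ℂ := fun x => νc * s * (w + Complex.I * t) - νc * Complex.I * x with hCy
  set Dy : ℝ → ℂ := fun x =>
    -νc * (((x:ℂ) - z * s / 2) ^ 2 + ((t:ℂ) - (x:ℂ) * s / 2) ^ 2 + w ^ 2 / 2) with hDy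
  set B2 : ℂ := -2 * νc with hB2
  set C2 : ℂ := νc * s * (z + 2 * (t:ℂ) - Complex.I * w) with hC2
  set D2 : ℂ := -νc * (z ^ 2 / 2 - w ^ 2 / 2 + 2 * (t:ℂ) ^ 2 - 2 * Complex.I * w * t) with hD2
  have hBre : B.re < 0 := by
    have : B = ((-ν / 2 : ℝ) : ℂ) := by rw [hB, hνc]; push_cast; ring
    rw [this, Complex.ofReal_re]; linarith
  have hB2re : B2.re < 0 := by
    have : B2 = ((-2 * ν : ℝ) : ℂ) := by rw [hB2, hνc]; push_cast; ring
    rw [this, Complex.ofReal_re]; linarith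
  -- pointwise rewrite of the exponent as a quadratic in y
  have e1 : ∀ x y : ℝ,
      -νc * (((x : ℂ) - z / s) ^ 2 + ((y : ℂ) - w / s) ^ 2
        + ((t : ℂ) - ((x : ℂ) + Complex.I * (y : ℂ)) / s) ^ 2)
      = B * (y:ℂ) ^ 2 + Cy x * (y:ℂ) + Dy x := by
    intro x y
    simp only [hdiv, hB, hCy, hDy]
    linear_combination (-νc*(w^2/4 + Complex.I*(x:ℂ)*(y:ℂ)/2 - (y:ℂ)^2/4)) * hs2
      + (-νc*(y:ℂ)^2*s^2/4) * Complex.I_sq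
  have e2 : ∀ x : ℝ, Dy x - (Cy x) ^ 2 / (4 * B) = B2 * (x:ℂ) ^ 2 + C2 * (x:ℂ) + D2 := by
    intro x
    have hq : (Cy x) ^ 2 / (4 * B)
        = -(νc * (s * (w + Complex.I * t) - Complex.I * (x:ℂ)) ^ 2) / 2 := by
      simp only [hCy, hB]
      field_simp
      ring
    rw [hq]
    simp only [hDy, hB2, hC2, hD2]
    linear_combination (-νc*((x:ℂ)^2/4 + z^2/4 + (t:ℂ)^2/2 - w^2/2 - Complex.I*w*(t:ℂ))) * hs2
      + (νc*((x:ℂ)^2/2 - s*(t:ℂ)*(x:ℂ) + s^2*(t:ℂ)^2/2)) * Complex.I_sq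
  have e3 : D2 - C2 ^ 2 / (4 * B2) = -νc * ((t:ℂ) - (z + Complex.I * w) / 2) ^ 2 := by
    have hq2 : C2 ^ 2 / (4 * B2)
        = -(νc * s ^ 2 * (z + 2 * (t:ℂ) - Complex.I * w) ^ 2) / 8 := by
      simp only [hC2, hB2]
      field_simp
      ring
    rw [hq2]
    simp only [hD2]
    linear_combination (νc*(z+2*(t:ℂ)-Complex.I*w)^2/8) * hs2 + (νc*w^2/2) * Complex.I_sq
  -- the integrand
  set f : ℝ × ℝ → ℂ := fun p =>
    Complex.exp (-νc * (((p.1 : ℂ) - z / s) ^ 2 + ((p.2 : ℂ) - w / s) ^ 2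
      + ((t : ℂ) - ((p.1 : ℂ) + Complex.I * (p.2 : ℂ)) / s) ^ 2)) with hf
  -- integrability
  have hcont : Continuous f := by fun_prop
  -- quadratic form of Dy
  have eDy : ∀ x : ℝ, Dy x = (-νc * (1 + s ^ 2 / 4)) * (x:ℂ) ^ 2 + (νc * s * (z + t)) * (x:ℂ)
      + (-νc * (z ^ 2 * s ^ 2 / 4 + (t:ℂ) ^ 2 + w ^ 2 / 2)) := by
    intro x; simp only [hDy]; ring
  have hbu : (-νc * (1 + s ^ 2 / 4)) = ((-3/2 * ν : ℝ) : ℂ) := by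
    rw [hs2, hνc]; push_cast; ring
  have hbure : (-νc * (1 + s ^ 2 / 4)).re < 0 := by
    rw [hbu, Complex.ofReal_re]; linarith
  have hu : Integrable (fun x : ℝ => Complex.exp (Dy x)) := by
    have h := integrable_cexp_quadratic' hbure (νc * s * (z + t))
      (-νc * (z ^ 2 * s ^ 2 / 4 + (t:ℂ) ^ 2 + w ^ 2 / 2))
    refine h.congr ?_
    filter_upwards with x
    rw [eDy x]
  have hv : Integrable (fun y : ℝ => Complex.exp (B * (y:ℂ) ^ 2 + (νc * s * (w + Complex.I * t)) * (y:ℂ))) := by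
    have h := integrable_cexp_quadratic' hBre (νc * s * (w + Complex.I * t)) 0
    refine h.congr ?_
    filter_upwards with y
    rw [add_zero]
  have hfi : Integrable f ((volume : Measure ℝ).prod (volume : Measure ℝ)) := by
    refine Integrable.mono' (hu.norm.mul_prod hv.norm) hcont.aestronglyMeasurable ?_
    filter_upwards with p
    have hsplit : f p = Complex.exp (Dy p.1)
        * (Complex.exp (-νc * Complex.I * (p.1:ℂ) * (p.2:ℂ))
          * Complex.exp (B * (p.2:ℂ) ^ 2 + (νc * s * (w + Complex.I * t)) * (p.2:ℂ))) := by
      rw [hf]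
      simp only
      rw [e1 p.1 p.2, ← Complex.exp_add, ← Complex.exp_add]
      congr 1
      simp only [hCy]
      ring
    rw [hsplit, norm_mul, norm_mul]
    have h1 : ‖Complex.exp (-νc * Complex.I * (p.1:ℂ) * (p.2:ℂ))‖ = 1 := by
      rw [Complex.norm_exp]
      have : (-νc * Complex.I * (p.1:ℂ) * (p.2:ℂ)) = ((-ν * p.1 * p.2 : ℝ) : ℂ) * Complex.I := by
        rw [hνc]; push_cast; ring
      rw [this]
      simp
    rw [h1, one_mul]
  -- Fubini
  calc ∫ p : ℝ × ℝ, f p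
      = ∫ x : ℝ, ∫ y : ℝ, f (x, y) := by
        rw [Measure.volume_eq_prod]
        exact integral_prod f hfi
    _ = ∫ x : ℝ, (↑π / -B) ^ (1/2 : ℂ) * Complex.exp (Dy x - (Cy x) ^ 2 / (4 * B)) := by
        refine integral_congr_ae (Filter.Eventually.of_forall fun x => ?_)
        have hfun : (fun y : ℝ => f (x, y))
            = fun y : ℝ => Complex.exp (B * (y:ℂ) ^ 2 + Cy x * (y:ℂ) + Dy x) := by
          funext y
          rw [hf]
          simp only
          rw [e1 x y]
        show (∫ y : ℝ, f (x, y)) = (↑π / -B) ^ (1/2 : ℂ) * Complex.exp (Dy x - (Cy x) ^ 2 / (4 * B))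
        rw [hfun, integral_cexp_quadratic hBre (Cy x) (Dy x)]
    _ = (↑π / -B) ^ (1/2 : ℂ) * ∫ x : ℝ, Complex.exp (Dy x - (Cy x) ^ 2 / (4 * B)) := by
        rw [integral_const_mul]
    _ = (↑π / -B) ^ (1/2 : ℂ) * ((↑π / -B2) ^ (1/2 : ℂ) * Complex.exp (D2 - C2 ^ 2 / (4 * B2))) := by
        have hfun : (fun x : ℝ => Complex.exp (Dy x - (Cy x) ^ 2 / (4 * B)))
            = fun x : ℝ => Complex.exp (B2 * (x:ℂ) ^ 2 + C2 * (x:ℂ) + D2) := by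
          funext x; rw [e2 x]
        rw [hfun, integral_cexp_quadratic hB2re C2 D2]
    _ = ((Real.pi / ν : ℝ) : ℂ) * Complex.exp (-νc * ((t : ℂ) - (z + Complex.I * w) / 2) ^ 2) := by
        rw [e3, ← mul_assoc]
        congr 1
        have h1 : (↑π / -B : ℂ) = ((2 * π / ν : ℝ) : ℂ) := by
          rw [hB, hνc]; push_cast; field_simp
        have h2 : (↑π / -B2 : ℂ) = ((π / (2 * ν) : ℝ) : ℂ) := by
          rw [hB2, hνc]; push_cast; field_simp
        rw [h1, h2]
        have p1 : (0:ℝ) ≤ 2 * π / ν := by positivity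
        have p2 : (0:ℝ) ≤ π / (2 * ν) := by positivity
        rw [show ((1:ℂ)/2) = ((1/2 : ℝ) : ℂ) by norm_num,
          ← Complex.ofReal_cpow p1, ← Complex.ofReal_cpow p2, ← Complex.ofReal_mul]
        congr 1
        rw [← Real.mul_rpow p1 p2]
        have : (2 * π / ν) * (π / (2 * ν)) = (π / ν) ^ 2 := by
          field_simp
        rw [this, ← Real.sqrt_eq_rpow, Real.sqrt_sq (by positivity)]
end

section
/- For ν > 0, x ∈ ℝ and ζ ∈ ℂ, the rescaled Fourier transform of the Hermite generating kernel satisfies (ν/(2π))^{1/2} ∫_ℝ exp((ν/2)(x - iu)²) · S(ζ, u) du = S(-iζ, x), where S(ζ, u) = (ν/π)^{3/4} exp(-(ν/2)ζ² + √2 ν ζ u). -/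
open Complex Real MeasureTheory

/-- The Hermite generating kernel `S(ζ,u) = (ν/π)^{3/4} exp(-(ν/2)ζ² + √2 ν ζ u)`. -/
noncomputable def hermiteKernel (ν : ℝ) (ζ : ℂ) (u : ℝ) : ℂ :=
  (((ν / Real.pi) ^ ((3 : ℝ) / 4) : ℝ) : ℂ)
    * Complex.exp (-((ν : ℂ) / 2) * ζ ^ 2 + (Real.sqrt 2 : ℂ) * (ν : ℂ) * ζ * (u : ℂ))

theorem fourier_of_hermite_kernel (ν : ℝ) (hν : 0 < ν) (x : ℝ) (ζ : ℂ) :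
    ((Real.sqrt (ν / (2 * Real.pi)) : ℝ) : ℂ)
      * ∫ u : ℝ, Complex.exp (((ν : ℂ) / 2) * ((x : ℂ) - Complex.I * (u : ℂ)) ^ 2)
          * hermiteKernel ν ζ u
    = hermiteKernel ν (-Complex.I * ζ) x := by
  have hνC : (ν : ℂ) ≠ 0 := Complex.ofReal_ne_zero.mpr hν.ne'
  set b : ℂ := -((ν : ℂ) / 2) with hb
  set c : ℂ := (Real.sqrt 2 : ℂ) * (ν : ℂ) * ζ - Complex.I * (ν : ℂ) * (x : ℂ) with hc
  set d : ℂ := ((ν : ℂ) / 2) * (x : ℂ) ^ 2 - ((ν : ℂ) / 2) * ζ ^ 2 with hd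
  have hbre : b.re < 0 := by
    simp [hb]
    positivity
  have key : ∀ u : ℝ,
      Complex.exp (((ν : ℂ) / 2) * ((x : ℂ) - Complex.I * (u : ℂ)) ^ 2)
          * hermiteKernel ν ζ u
      = (((ν / Real.pi) ^ ((3 : ℝ) / 4) : ℝ) : ℂ) * Complex.exp (b * u ^ 2 + c * u + d) := by
    intro u
    rw [hermiteKernel, ← mul_assoc, mul_comm _ ((((ν / Real.pi) ^ ((3 : ℝ) / 4) : ℝ) : ℂ)),
      mul_assoc, ← Complex.exp_add]
    congr 1
    simp only [hb, hc, hd]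
    ring_nf
    rw [Complex.I_sq]
    ring_nf
  simp_rw [key]
  rw [integral_const_mul, integral_cexp_quadratic hbre]
  have hπb : ↑Real.pi / -b = ((2 * Real.pi / ν : ℝ) : ℂ) := by
    simp only [hb, neg_neg]
    push_cast
    field_simp
  have hcpow : (↑Real.pi / -b) ^ (1 / 2 : ℂ) = ((Real.sqrt (2 * Real.pi / ν) : ℝ) : ℂ) := by
    rw [hπb, Real.sqrt_eq_rpow, Complex.ofReal_cpow (by positivity)]
    norm_num
  rw [hcpow]
  have hpref : ((Real.sqrt (ν / (2 * Real.pi)) : ℝ) : ℂ)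
      * ((Real.sqrt (2 * Real.pi / ν) : ℝ) : ℂ) = 1 := by
    rw [← Complex.ofReal_mul, ← Real.sqrt_mul (by positivity)]
    have : ν / (2 * Real.pi) * (2 * Real.pi / ν) = 1 := by
      field_simp
    rw [this, Real.sqrt_one, Complex.ofReal_one]
  have hexp : Complex.exp (d - c ^ 2 / (4 * b))
      = Complex.exp (-((ν : ℂ) / 2) * (-Complex.I * ζ) ^ 2
          + (Real.sqrt 2 : ℂ) * (ν : ℂ) * (-Complex.I * ζ) * (x : ℂ)) := by
    simp only [hb, hc, hd]
    have h2 : ((Real.sqrt 2 : ℂ)) ^ 2 = 2 := by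
      rw [← Complex.ofReal_pow, Real.sq_sqrt (by norm_num)]; norm_num
    have hI : (Complex.I : ℂ) ^ 2 = -1 := Complex.I_sq
    have hc2 : ((Real.sqrt 2 : ℂ) * (ν : ℂ) * ζ - Complex.I * (ν : ℂ) * (x : ℂ)) ^ 2
        = 2 * (ν:ℂ)^2 * ζ^2 - 2 * (Real.sqrt 2 : ℂ) * Complex.I * (ν:ℂ)^2 * ζ * (x:ℂ)
          + (-1) * (ν:ℂ)^2 * (x:ℂ)^2 := by
      linear_combination ((ν:ℂ)^2 * ζ^2) * h2 + ((ν:ℂ)^2 * (x:ℂ)^2) * hI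
    rw [hc2]
    congr 1
    field_simp
    linear_combination (4 * ζ^2) * hI
  rw [hermiteKernel, ← hexp]
  linear_combination ((((ν / Real.pi) ^ ((3 : ℝ) / 4) : ℝ) : ℂ)
    * Complex.exp (d - c ^ 2 / (4 * b))) * hpref
end
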